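/- Let λ ∈ ℝ and let E : ℝ^d → ℝ be λ-convex, i.e. x ↦ E(x) − (λ/2)|x|² is convex, let 0 < T < ∞, u⁰ ∈ ℝ^d, and let ε > 0 satisfy 4 ε max(−λ, 0) < 1. If u, v ∈ C¹([0,T]; ℝ^d) with u(0) = v(0) = u⁰ both minimize the functional W^ε(w) = ∫_0^T e^{-t/ε} ( (ε/2)|w'(t)|² + E(w(t)) ) dt over all w ∈ C¹([0,T]; ℝ^d) with w(0) = u⁰, then u = v. -/

import Mathlib

open Set MeasureTheory intervalIntegral Real Filter
open scoped RealInnerProductSpace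

section aux
variable {H : Type*} [NormedAddCommGroup H] [InnerProductSpace ℝ H]

lemma hasDerivAt_primitive_interior {T : ℝ} {c : ℝ → ℝ} (hc : ContinuousOn c (Set.Icc 0 T))
    {t : ℝ} (ht : t ∈ Set.Ioo 0 T) :
    HasDerivAt (fun x => ∫ s in (0:ℝ)..x, c s) (c t) t := by
  have hsub : Set.uIcc (0:ℝ) t ⊆ Set.Icc 0 T := by
    rw [Set.uIcc_of_le ht.1.le]
    exact Set.Icc_subset_Icc le_rfl ht.2.le
  refine intervalIntegral.integral_hasDerivAt_right
    ((hc.mono hsub).intervalIntegrable) ?_ ?_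
  · exact (hc.mono Set.Ioo_subset_Icc_self).stronglyMeasurableAtFilter isOpen_Ioo t ht
  · exact hc.continuousAt (Icc_mem_nhds ht.1 ht.2)

lemma continuousOn_primitive_Icc {T : ℝ} (hT : 0 ≤ T) {c : ℝ → ℝ}
    (hc : ContinuousOn c (Set.Icc 0 T)) :
    ContinuousOn (fun x => ∫ s in (0:ℝ)..x, c s) (Set.Icc 0 T) := by
  have := continuousOn_primitive_interval (a := (0:ℝ)) (b := T) (μ := volume) (f := c) ?_
  · rwa [Set.uIcc_of_le hT] at this
  · rw [Set.uIcc_of_le hT]; exact hc.integrableOn_Icc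

lemma gronwall_wide {T ε : ℝ} (hT : 0 < T) (hε : 0 < ε)
    {g : ℝ → H} (hg : ContDiffOn ℝ 1 g (Set.Icc 0 T)) (hg0 : g 0 = 0) :
    (∫ t in (0:ℝ)..T, Real.exp (-t/ε) * ‖g t‖^2) ≤
      4*ε^2 * ∫ t in (0:ℝ)..T, Real.exp (-t/ε) * ‖derivWithin g (Set.Icc 0 T) t‖^2 := by
  have hud : UniqueDiffOn ℝ (Set.Icc (0:ℝ) T) := uniqueDiffOn_Icc hT
  set g' := derivWithin g (Set.Icc 0 T) with hg'def
  have hg'c : ContinuousOn g' (Set.Icc 0 T) := hg.continuousOn_derivWithin hud le_rfl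
  have hgc : ContinuousOn g (Set.Icc 0 T) := hg.continuousOn
  have hgd : ∀ t ∈ Set.Ioo (0:ℝ) T, HasDerivAt g (g' t) t := fun t ht =>
    ((hg.differentiableOn one_ne_zero t (Set.Ioo_subset_Icc_self ht)).hasDerivWithinAt).hasDerivAt
      (Icc_mem_nhds ht.1 ht.2)
  set c0 : ℝ → ℝ := fun s => Real.exp (-s/ε) * ‖g s‖^2 with hc0def
  set c1 : ℝ → ℝ := fun s => Real.exp (-s/ε) * ‖g' s‖^2 with hc1def
  set c2 : ℝ → ℝ := fun s => Real.exp (-s/(2*ε)) * ‖g' s‖^2 with hc2def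
  have hexpc : ∀ b : ℝ, Continuous fun s : ℝ => Real.exp (-s/b) :=
    fun b => Real.continuous_exp.comp ((continuous_neg.comp continuous_id).div_const b)
  have hc0 : ContinuousOn c0 (Set.Icc 0 T) :=
    ((hexpc ε).continuousOn).mul (hgc.norm.pow 2)
  have hc1 : ContinuousOn c1 (Set.Icc 0 T) :=
    ((hexpc ε).continuousOn).mul (hg'c.norm.pow 2)
  have hc2 : ContinuousOn c2 (Set.Icc 0 T) :=
    ((hexpc (2*ε)).continuousOn).mul (hg'c.norm.pow 2)
  set B : ℝ → ℝ := fun x => ∫ s in (0:ℝ)..x, c2 s with hBdef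
  set A : ℝ → ℝ := fun x => ∫ s in (0:ℝ)..x, c1 s with hAdef
  set S : ℝ → ℝ := fun x => ∫ s in (0:ℝ)..x, c0 s with hSdef
  have hBc : ContinuousOn B (Set.Icc 0 T) := continuousOn_primitive_Icc hT.le hc2
  have hAc : ContinuousOn A (Set.Icc 0 T) := continuousOn_primitive_Icc hT.le hc1
  have hSc : ContinuousOn S (Set.Icc 0 T) := continuousOn_primitive_Icc hT.le hc0
  have hBnn : ∀ t ∈ Set.Icc (0:ℝ) T, 0 ≤ B t := by
    intro t ht
    refine intervalIntegral.integral_nonneg ht.1 fun s _ => ?_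
    positivity
  -- exp derivative helper
  have hexpd : ∀ (b t : ℝ), HasDerivAt (fun s : ℝ => Real.exp (-s/b))
      (Real.exp (-t/b) * (-1/b)) t := by
    intro b t
    exact (((hasDerivAt_id t).neg).div_const b).exp
  -- Step 1
  set F1 : ℝ → ℝ := fun t => Real.exp (-t/(2*ε)) * ‖g t‖^2 - 2*ε * B t with hF1def
  have hF1d : ∀ t ∈ Set.Ioo (0:ℝ) T, HasDerivAt F1
      (Real.exp (-t/(2*ε)) * (-1/(2*ε)) * ‖g t‖^2
        + Real.exp (-t/(2*ε)) * ((inner ℝ (g t) (g' t) + inner ℝ (g' t) (g t) : ℝ)) - 2*ε * c2 t) t := by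
    intro t ht
    have hnorm : HasDerivAt (fun s => ‖g s‖^2) ((inner ℝ (g t) (g' t) + inner ℝ (g' t) (g t) : ℝ)) t := by
      have h1 := HasDerivAt.inner ℝ (hgd t ht) (hgd t ht)
      simpa only [real_inner_self_eq_norm_sq] using h1
    exact ((hexpd (2*ε) t).mul hnorm).sub
      ((hasDerivAt_primitive_interior hc2 ht).const_mul (2*ε))
  have hF1anti : AntitoneOn F1 (Set.Icc 0 T) := by
    refine antitoneOn_of_deriv_nonpos (convex_Icc 0 T)
      ((((hexpc (2*ε)).continuousOn).mul (hgc.norm.pow 2)).sub (continuousOn_const.mul hBc))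
      ?_ ?_
    · rw [interior_Icc]
      exact fun t ht => (hF1d t ht).differentiableAt.differentiableWithinAt
    · rw [interior_Icc]
      intro t ht
      rw [(hF1d t ht).deriv]
      have hip : (inner ℝ (g' t) (g t) : ℝ) ≤ ‖g' t‖ * ‖g t‖ := real_inner_le_norm _ _
      have hip2 : (inner ℝ (g t) (g' t) : ℝ) ≤ ‖g' t‖ * ‖g t‖ := by
        rw [real_inner_comm]; exact hip
      have hep : (0:ℝ) < Real.exp (-t/(2*ε)) := Real.exp_pos _
      have hc2t : c2 t = Real.exp (-t/(2*ε)) * ‖g' t‖^2 := rfl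
      rw [hc2t]
      have key : (inner ℝ (g t) (g' t) + inner ℝ (g' t) (g t) : ℝ)
          ≤ 1/(2*ε) * ‖g t‖^2 + 2*ε*‖g' t‖^2 := by
        have h4 : 4*ε*(‖g' t‖ * ‖g t‖) ≤ ‖g t‖^2 + 4*ε^2*‖g' t‖^2 := by
          nlinarith [sq_nonneg (‖g t‖ - 2*ε*‖g' t‖)]
        have h2e : (0:ℝ) < 2*ε := by positivity
        rw [← sub_nonneg]
        have expand : 1/(2*ε) * ‖g t‖^2 + 2*ε*‖g' t‖^2
            - ((inner ℝ (g t) (g' t) + inner ℝ (g' t) (g t) : ℝ))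
            = (‖g t‖^2 + 4*ε^2*‖g' t‖^2
              - ((inner ℝ (g t) (g' t) + inner ℝ (g' t) (g t) : ℝ))*(2*ε))/(2*ε) := by
          field_simp; ring
        rw [expand]
        apply div_nonneg _ h2e.le
        nlinarith [h4, hip, hip2, hε]
      have hmul := mul_le_mul_of_nonneg_left key hep.le
      have hrw : Real.exp (-t/(2*ε)) * (-1/(2*ε)) * ‖g t‖^2
          = -(Real.exp (-t/(2*ε)) * (1/(2*ε) * ‖g t‖^2)) := by ring
      nlinarith [hmul]
  have key1 : ∀ t ∈ Set.Icc (0:ℝ) T, Real.exp (-t/(2*ε)) * ‖g t‖^2 ≤ 2*ε * B t := by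
    intro t ht
    have h0 : (0:ℝ) ∈ Set.Icc (0:ℝ) T := ⟨le_rfl, hT.le⟩
    have := hF1anti h0 ht ht.1
    have hF10 : F1 0 = 0 := by
      simp [hF1def, hg0, hBdef, intervalIntegral.integral_same]
    rw [hF10] at this
    simpa [hF1def, sub_nonpos] using this
  -- Step 2
  set F : ℝ → ℝ := fun t => S t + 4*ε^2 * (Real.exp (-t/(2*ε)) * B t) - 4*ε^2 * A t with hFdef
  have hexp2 : ∀ t : ℝ, Real.exp (-t/(2*ε)) * Real.exp (-t/(2*ε)) = Real.exp (-t/ε) := by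
    intro t; rw [← Real.exp_add]; congr 1; field_simp; ring
  have hFd : ∀ t ∈ Set.Ioo (0:ℝ) T, HasDerivAt F
      (c0 t + 4*ε^2 * (Real.exp (-t/(2*ε)) * (-1/(2*ε)) * B t + Real.exp (-t/(2*ε)) * c2 t)
        - 4*ε^2 * c1 t) t := by
    intro t ht
    exact ((hasDerivAt_primitive_interior hc0 ht).add
      (((hexpd (2*ε) t).mul (hasDerivAt_primitive_interior hc2 ht)).const_mul (4*ε^2))).sub
      ((hasDerivAt_primitive_interior hc1 ht).const_mul (4*ε^2))
  have hFanti : AntitoneOn F (Set.Icc 0 T) := by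
    refine antitoneOn_of_deriv_nonpos (convex_Icc 0 T)
      ((hSc.add (continuousOn_const.mul ((hexpc (2*ε)).continuousOn.mul hBc))).sub
        (continuousOn_const.mul hAc)) ?_ ?_
    · rw [interior_Icc]; exact fun t ht => (hFd t ht).differentiableAt.differentiableWithinAt
    · rw [interior_Icc]; intro t ht
      rw [(hFd t ht).deriv]
      have h1 : Real.exp (-t/(2*ε)) * c2 t = c1 t := by
        show Real.exp (-t/(2*ε)) * (Real.exp (-t/(2*ε)) * ‖g' t‖^2) = Real.exp (-t/ε) * ‖g' t‖^2
        rw [← mul_assoc, hexp2]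
      have h2 : c0 t ≤ Real.exp (-t/(2*ε)) * (2*ε*B t) := by
        have hkey := mul_le_mul_of_nonneg_left (key1 t (Set.Ioo_subset_Icc_self ht))
          (Real.exp_pos (-t/(2*ε))).le
        calc c0 t = Real.exp (-t/(2*ε)) * (Real.exp (-t/(2*ε)) * ‖g t‖^2) := by
              show Real.exp (-t/ε) * ‖g t‖^2 = _; rw [← mul_assoc, hexp2]
          _ ≤ _ := hkey
      have heq : c0 t + 4*ε^2 * (Real.exp (-t/(2*ε)) * (-1/(2*ε)) * B t
            + Real.exp (-t/(2*ε)) * c2 t) - 4*ε^2 * c1 t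
          = c0 t - Real.exp (-t/(2*ε)) * (2*ε*B t) := by
        rw [h1]; field_simp; ring
      rw [heq]; linarith [h2]
  have hF0 : F 0 = 0 := by
    simp [hFdef, hSdef, hAdef, hBdef, intervalIntegral.integral_same]
  have hFT := hFanti (Set.left_mem_Icc.2 hT.le) (Set.right_mem_Icc.2 hT.le) hT.le
  rw [hF0] at hFT
  have hBT := hBnn T (Set.right_mem_Icc.2 hT.le)
  have hfin : S T ≤ 4*ε^2 * A T := by
    have hexpBT : 0 ≤ 4*ε^2 * (Real.exp (-T/(2*ε)) * B T) := by positivity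
    simp only [hFdef] at hFT
    linarith [hFT, hexpBT]
  exact hfin

lemma zero_of_weighted_integral_nonpos {T ε : ℝ} (hT : 0 < T) (hε : 0 < ε)
    {g : ℝ → H} (hg : ContDiffOn ℝ 1 g (Set.Icc 0 T)) (hg0 : g 0 = 0)
    (hA : (∫ t in (0:ℝ)..T, Real.exp (-t/ε) * ‖derivWithin g (Set.Icc 0 T) t‖^2) ≤ 0) :
    ∀ t ∈ Set.Icc (0:ℝ) T, g t = 0 := by
  have hud : UniqueDiffOn ℝ (Set.Icc (0:ℝ) T) := uniqueDiffOn_Icc hT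
  set g' := derivWithin g (Set.Icc 0 T) with hg'def
  have hg'c : ContinuousOn g' (Set.Icc 0 T) := hg.continuousOn_derivWithin hud le_rfl
  set c1 : ℝ → ℝ := fun s => Real.exp (-s/ε) * ‖g' s‖^2 with hc1def
  have hc1 : ContinuousOn c1 (Set.Icc 0 T) :=
    ((Real.continuous_exp.comp ((continuous_neg.comp continuous_id).div_const ε)).continuousOn).mul
      (hg'c.norm.pow 2)
  set A : ℝ → ℝ := fun x => ∫ s in (0:ℝ)..x, c1 s with hAdef
  have hint : ∀ t ∈ Set.Icc (0:ℝ) T, IntervalIntegrable c1 volume 0 t := by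
    intro t ht
    apply ContinuousOn.intervalIntegrable
    apply hc1.mono
    rw [Set.uIcc_of_le ht.1]
    exact Set.Icc_subset_Icc le_rfl ht.2
  have hint2 : ∀ t ∈ Set.Icc (0:ℝ) T, IntervalIntegrable c1 volume t T := by
    intro t ht
    apply ContinuousOn.intervalIntegrable
    apply hc1.mono
    rw [Set.uIcc_of_le ht.2]
    exact Set.Icc_subset_Icc ht.1 le_rfl
  have hA0 : ∀ t ∈ Set.Icc (0:ℝ) T, A t = 0 := by
    intro t ht
    have h1 : 0 ≤ A t := intervalIntegral.integral_nonneg ht.1 fun s _ => by positivity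
    have h2 : 0 ≤ ∫ s in t..T, c1 s := intervalIntegral.integral_nonneg ht.2 fun s _ => by
      positivity
    have h3 : A t + ∫ s in t..T, c1 s = ∫ s in (0:ℝ)..T, c1 s :=
      intervalIntegral.integral_add_adjacent_intervals (hint t ht) (hint2 t ht)
    have := hA
    linarith [h3, h1, h2]
  have hIoo : ∀ t ∈ Set.Ioo (0:ℝ) T, g' t = 0 := by
    intro t ht
    have hA' := hasDerivAt_primitive_interior hc1 ht
    have heq : A =ᶠ[nhds t] (fun _ => (0:ℝ)) :=
      Filter.eventuallyEq_of_mem (Icc_mem_nhds ht.1 ht.2) fun s hs => hA0 s hs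
    have hzero : HasDerivAt A 0 t :=
      (hasDerivAt_const t (0:ℝ)).congr_of_eventuallyEq heq
    have hc1t : c1 t = 0 := hA'.unique hzero
    have : ‖g' t‖^2 = 0 := by
      have he := Real.exp_pos (-t/ε)
      by_contra hne
      have : 0 < ‖g' t‖^2 := lt_of_le_of_ne (by positivity) (Ne.symm hne)
      have hc1t' : Real.exp (-t/ε) * ‖g' t‖^2 = 0 := hc1t
      nlinarith [hc1t']
    simpa using this
  have hzero : ∀ t ∈ Set.Icc (0:ℝ) T, g' t = 0 := by
    intro t ht
    have h1 : Filter.Tendsto g' (nhdsWithin t (Set.Ioo 0 T)) (nhds (g' t)) :=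
      ((hg'c t ht).mono Set.Ioo_subset_Icc_self).tendsto
    have hne : (nhdsWithin t (Set.Ioo (0:ℝ) T)).NeBot := by
      rw [← mem_closure_iff_nhdsWithin_neBot, closure_Ioo hT.ne]
      exact ht
    have h2 : Filter.Tendsto g' (nhdsWithin t (Set.Ioo 0 T)) (nhds 0) := by
      refine Filter.Tendsto.congr' ?_ tendsto_const_nhds
      filter_upwards [self_mem_nhdsWithin] with s hs
      exact (hIoo s hs).symm
    exact tendsto_nhds_unique h1 h2
  intro t ht
  have := constant_of_derivWithin_zero (f := g) (a := 0) (b := T)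
    (hg.differentiableOn one_ne_zero) (fun x hx => hzero x (Set.Ico_subset_Icc_self hx)) t ht
  rw [this, hg0]

lemma midpoint_norm_sq (x y : H) :
    ‖(2:ℝ)⁻¹ • (x+y)‖^2 = ‖x‖^2/2 + ‖y‖^2/2 - ‖x-y‖^2/4 := by
  have h1 : ‖x+y‖^2 = ‖x‖^2 + 2*(inner ℝ x y : ℝ) + ‖y‖^2 := norm_add_sq_real x y
  have h2 : ‖x-y‖^2 = ‖x‖^2 - 2*(inner ℝ x y : ℝ) + ‖y‖^2 := norm_sub_sq_real x y
  rw [norm_smul, mul_pow]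
  have h3 : ‖(2:ℝ)⁻¹‖^2 = 1/4 := by
    rw [norm_inv, Real.norm_ofNat]; norm_num
  rw [h3]; linarith

lemma midpoint_energy {lam : ℝ} {E : H → ℝ}
    (hlam : ConvexOn ℝ Set.univ fun x => E x - (lam / 2) * ‖x‖ ^ 2) (x y : H) :
    E ((2:ℝ)⁻¹ • (x+y)) ≤ E x/2 + E y/2 - (lam/8)*‖x-y‖^2 := by
  have h := hlam.2 (Set.mem_univ x) (Set.mem_univ y)
    (by norm_num : (0:ℝ) ≤ 1/2) (by norm_num : (0:ℝ) ≤ 1/2) (by norm_num)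
  have hmid : ((1:ℝ)/2) • x + ((1:ℝ)/2) • y = (2:ℝ)⁻¹ • (x+y) := by
    rw [smul_add]; norm_num
  rw [hmid] at h
  simp only [smul_eq_mul] at h
  rw [midpoint_norm_sq x y] at h
  linarith [h]

end aux


set_option maxHeartbeats 2000000 in
/-- uniqueness of WIDE minimizers for λ-convex energies. Let
`E : ℝ^d → ℝ` be λ-convex, `0 < T < ∞`, `a = u⁰ ∈ ℝ^d`, and `ε > 0` with
`4ε max(−λ,0) < 1`. If `u, v ∈ C¹([0,T];ℝ^d)` with `u(0) = v(0) = u⁰` both minimize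
`W^ε(w) = ∫_0^T e^{-t/ε}((ε/2)|w'|² + E(w)) dt` over all `w ∈ C¹([0,T];ℝ^d)` with
`w(0) = u⁰`, then `u = v` on `[0,T]`. -/
theorem wide_minimizer_unique_lambda_convex (d : ℕ) (lam : ℝ)
    (E : EuclideanSpace ℝ (Fin d) → ℝ)
    (hlam : ConvexOn ℝ Set.univ fun x => E x - (lam / 2) * ‖x‖ ^ 2)
    (T ε : ℝ) (hT : 0 < T) (hε : 0 < ε) (hsmall : 4 * ε * max (-lam) 0 < 1)
    (a : EuclideanSpace ℝ (Fin d))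
    (u v : ℝ → EuclideanSpace ℝ (Fin d))
    (hu : ContDiffOn ℝ 1 u (Set.Icc 0 T)) (hv : ContDiffOn ℝ 1 v (Set.Icc 0 T))
    (hu0 : u 0 = a) (hv0 : v 0 = a)
    (humin : ∀ w : ℝ → EuclideanSpace ℝ (Fin d), ContDiffOn ℝ 1 w (Set.Icc 0 T) →
      w 0 = a →
      (∫ t in (0 : ℝ)..T, Real.exp (-t / ε) *
          ((ε / 2) * ‖derivWithin u (Set.Icc 0 T) t‖ ^ 2 + E (u t)))
        ≤ ∫ t in (0 : ℝ)..T, Real.exp (-t / ε) *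
          ((ε / 2) * ‖derivWithin w (Set.Icc 0 T) t‖ ^ 2 + E (w t)))
    (hvmin : ∀ w : ℝ → EuclideanSpace ℝ (Fin d), ContDiffOn ℝ 1 w (Set.Icc 0 T) →
      w 0 = a →
      (∫ t in (0 : ℝ)..T, Real.exp (-t / ε) *
          ((ε / 2) * ‖derivWithin v (Set.Icc 0 T) t‖ ^ 2 + E (v t)))
        ≤ ∫ t in (0 : ℝ)..T, Real.exp (-t / ε) *
          ((ε / 2) * ‖derivWithin w (Set.Icc 0 T) t‖ ^ 2 + E (w t))) :
    ∀ t ∈ Set.Icc (0 : ℝ) T, u t = v t := by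
  have hud : UniqueDiffOn ℝ (Set.Icc (0:ℝ) T) := uniqueDiffOn_Icc hT
  have hIcc : Set.uIcc (0:ℝ) T = Set.Icc 0 T := Set.uIcc_of_le hT.le
  -- continuity of E
  have hEc : Continuous E := by
    have hf : ContinuousOn (fun x => E x - (lam/2)*‖x‖^2) Set.univ :=
      hlam.continuousOn isOpen_univ
    rw [continuousOn_univ] at hf
    have h2 : Continuous fun x : EuclideanSpace ℝ (Fin d) =>
        (E x - (lam/2)*‖x‖^2) + (lam/2)*‖x‖^2 :=
      hf.add (continuous_const.mul (continuous_norm.pow 2))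
    simpa using h2
  set u' := derivWithin u (Set.Icc 0 T) with hu'def
  set v' := derivWithin v (Set.Icc 0 T) with hv'def
  have huD : ∀ t ∈ Set.Icc (0:ℝ) T, HasDerivWithinAt u (u' t) (Set.Icc 0 T) t :=
    fun t ht => (hu.differentiableOn one_ne_zero t ht).hasDerivWithinAt
  have hvD : ∀ t ∈ Set.Icc (0:ℝ) T, HasDerivWithinAt v (v' t) (Set.Icc 0 T) t :=
    fun t ht => (hv.differentiableOn one_ne_zero t ht).hasDerivWithinAt
  have hu'c : ContinuousOn u' (Set.Icc 0 T) := hu.continuousOn_derivWithin hud le_rfl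
  have hv'c : ContinuousOn v' (Set.Icc 0 T) := hv.continuousOn_derivWithin hud le_rfl
  set g : ℝ → EuclideanSpace ℝ (Fin d) := fun t => u t - v t with hgdef
  have hgC : ContDiffOn ℝ 1 g (Set.Icc 0 T) := hu.sub hv
  have hg0 : g 0 = 0 := by simp [hgdef, hu0, hv0]
  have hg' : ∀ t ∈ Set.Icc (0:ℝ) T, derivWithin g (Set.Icc 0 T) t = u' t - v' t :=
    fun t ht => ((huD t ht).sub (hvD t ht)).derivWithin (hud t ht)
  have hg'c : ContinuousOn (derivWithin g (Set.Icc 0 T)) (Set.Icc 0 T) :=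
    hgC.continuousOn_derivWithin hud le_rfl
  set m : ℝ → EuclideanSpace ℝ (Fin d) := fun t => (2:ℝ)⁻¹ • (u t + v t) with hmdef
  have hmC : ContDiffOn ℝ 1 m (Set.Icc 0 T) := (hu.add hv).const_smul _
  have hm0 : m 0 = a := by
    show (2:ℝ)⁻¹ • (u 0 + v 0) = a
    rw [hu0, hv0, ← two_smul ℝ a, smul_smul]
    norm_num
  have hm' : ∀ t ∈ Set.Icc (0:ℝ) T,
      derivWithin m (Set.Icc 0 T) t = (2:ℝ)⁻¹ • (u' t + v' t) :=
    fun t ht => (((huD t ht).add (hvD t ht)).const_smul ((2:ℝ)⁻¹)).derivWithin (hud t ht)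
  have hm'c : ContinuousOn (derivWithin m (Set.Icc 0 T)) (Set.Icc 0 T) :=
    hmC.continuousOn_derivWithin hud le_rfl
  have hexpc : Continuous fun t : ℝ => Real.exp (-t/ε) :=
    Real.continuous_exp.comp ((continuous_neg.comp continuous_id).div_const ε)
  set X : ℝ → ℝ := fun t => Real.exp (-t / ε) * ((ε / 2) * ‖u' t‖ ^ 2 + E (u t)) with hXdef
  set Y : ℝ → ℝ := fun t => Real.exp (-t / ε) * ((ε / 2) * ‖v' t‖ ^ 2 + E (v t)) with hYdef
  set M : ℝ → ℝ := fun t => Real.exp (-t / ε) *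
    ((ε / 2) * ‖derivWithin m (Set.Icc 0 T) t‖ ^ 2 + E (m t)) with hMdef
  set Z : ℝ → ℝ := fun t => Real.exp (-t / ε) *
    (ε * ‖u' t - v' t‖^2 + lam * ‖u t - v t‖^2) with hZdef
  have hXc : ContinuousOn X (Set.Icc 0 T) :=
    hexpc.continuousOn.mul ((continuousOn_const.mul (hu'c.norm.pow 2)).add
      (hEc.comp_continuousOn hu.continuousOn))
  have hYc : ContinuousOn Y (Set.Icc 0 T) :=
    hexpc.continuousOn.mul ((continuousOn_const.mul (hv'c.norm.pow 2)).add
      (hEc.comp_continuousOn hv.continuousOn))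
  have hMc : ContinuousOn M (Set.Icc 0 T) :=
    hexpc.continuousOn.mul ((continuousOn_const.mul (hm'c.norm.pow 2)).add
      (hEc.comp_continuousOn hmC.continuousOn))
  have hZc : ContinuousOn Z (Set.Icc 0 T) :=
    hexpc.continuousOn.mul ((continuousOn_const.mul ((hu'c.sub hv'c).norm.pow 2)).add
      (continuousOn_const.mul ((hu.continuousOn.sub hv.continuousOn).norm.pow 2)))
  have hXi : IntervalIntegrable X volume 0 T := (hIcc ▸ hXc).intervalIntegrable
  have hYi : IntervalIntegrable Y volume 0 T := (hIcc ▸ hYc).intervalIntegrable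
  have hMi : IntervalIntegrable M volume 0 T := (hIcc ▸ hMc).intervalIntegrable
  have hZi : IntervalIntegrable Z volume 0 T := (hIcc ▸ hZc).intervalIntegrable
  -- pointwise estimate
  have hpt : ∀ t ∈ Set.Icc (0:ℝ) T, M t ≤ 1/2 * X t + 1/2 * Y t - 1/8 * Z t := by
    intro t ht
    have h1 : ‖derivWithin m (Set.Icc 0 T) t‖^2
        = ‖u' t‖^2/2 + ‖v' t‖^2/2 - ‖u' t - v' t‖^2/4 := by
      rw [hm' t ht, midpoint_norm_sq]
    have h2 : E (m t) ≤ E (u t)/2 + E (v t)/2 - (lam/8)*‖u t - v t‖^2 :=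
      midpoint_energy hlam (u t) (v t)
    have hscal : (ε/2) * ‖derivWithin m (Set.Icc 0 T) t‖^2 + E (m t)
        ≤ 1/2*((ε/2)*‖u' t‖^2 + E (u t)) + 1/2*((ε/2)*‖v' t‖^2 + E (v t))
          - 1/8*(ε*‖u' t - v' t‖^2 + lam*‖u t - v t‖^2) := by
      rw [h1]; linarith [h2]
    calc M t = Real.exp (-t/ε) * ((ε/2)*‖derivWithin m (Set.Icc 0 T) t‖^2 + E (m t)) := rfl
      _ ≤ Real.exp (-t/ε) * (1/2*((ε/2)*‖u' t‖^2 + E (u t))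
            + 1/2*((ε/2)*‖v' t‖^2 + E (v t))
            - 1/8*(ε*‖u' t - v' t‖^2 + lam*‖u t - v t‖^2)) :=
          mul_le_mul_of_nonneg_left hscal (Real.exp_pos _).le
      _ = 1/2 * X t + 1/2 * Y t - 1/8 * Z t := by simp only [hXdef, hYdef, hZdef]; ring
  have hWm : (∫ t in (0:ℝ)..T, M t) ≤ ∫ t in (0:ℝ)..T, (1/2 * X t + 1/2 * Y t - 1/8 * Z t) := by
    apply intervalIntegral.integral_mono_on hT.le hMi
      (((hXi.const_mul _).add (hYi.const_mul _)).sub (hZi.const_mul _))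
    exact hpt
  have hsplit : (∫ t in (0:ℝ)..T, (1/2 * X t + 1/2 * Y t - 1/8 * Z t))
      = 1/2 * (∫ t in (0:ℝ)..T, X t) + 1/2 * (∫ t in (0:ℝ)..T, Y t)
        - 1/8 * (∫ t in (0:ℝ)..T, Z t) := by
    rw [intervalIntegral.integral_sub ((hXi.const_mul _).add (hYi.const_mul _))
        (hZi.const_mul _),
      intervalIntegral.integral_add (hXi.const_mul _) (hYi.const_mul _),
      intervalIntegral.integral_const_mul, intervalIntegral.integral_const_mul,
      intervalIntegral.integral_const_mul]
  have hWu : (∫ t in (0:ℝ)..T, X t) ≤ ∫ t in (0:ℝ)..T, M t := humin m hmC hm0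
  have hWv : (∫ t in (0:ℝ)..T, Y t) ≤ ∫ t in (0:ℝ)..T, M t := hvmin m hmC hm0
  have hZneg : (∫ t in (0:ℝ)..T, Z t) ≤ 0 := by linarith [hWu, hWv, hWm, hsplit]
  -- identify Z with ε·A + lam·S for g
  have hgint : IntervalIntegrable (fun t => Real.exp (-t/ε)
      * ‖derivWithin g (Set.Icc 0 T) t‖^2) volume 0 T := by
    apply ContinuousOn.intervalIntegrable
    rw [hIcc]
    exact hexpc.continuousOn.mul (hg'c.norm.pow 2)
  have hgint2 : IntervalIntegrable (fun t => Real.exp (-t/ε) * ‖g t‖^2) volume 0 T := by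
    apply ContinuousOn.intervalIntegrable
    rw [hIcc]
    exact hexpc.continuousOn.mul (hgC.continuousOn.norm.pow 2)
  set AT := ∫ t in (0:ℝ)..T, Real.exp (-t/ε) * ‖derivWithin g (Set.Icc 0 T) t‖^2 with hATdef
  set ST := ∫ t in (0:ℝ)..T, Real.exp (-t/ε) * ‖g t‖^2 with hSTdef
  have hZeq : (∫ t in (0:ℝ)..T, Z t) = ε * AT + lam * ST := by
    rw [hATdef, hSTdef, ← intervalIntegral.integral_const_mul,
      ← intervalIntegral.integral_const_mul,
      ← intervalIntegral.integral_add (hgint.const_mul ε) (hgint2.const_mul lam)]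
    apply intervalIntegral.integral_congr
    intro t ht
    rw [hIcc] at ht
    show Z t = ε * (Real.exp (-t/ε) * ‖derivWithin g (Set.Icc 0 T) t‖^2)
      + lam * (Real.exp (-t/ε) * ‖g t‖^2)
    rw [hg' t ht]
    show Real.exp (-t / ε) * (ε * ‖u' t - v' t‖^2 + lam * ‖u t - v t‖^2) = _
    ring
  have hgr : ST ≤ 4*ε^2 * AT := gronwall_wide hT hε hgC hg0
  have hATnn : 0 ≤ AT := intervalIntegral.integral_nonneg hT.le fun s _ => by positivity
  have hSTnn : 0 ≤ ST := intervalIntegral.integral_nonneg hT.le fun s _ => by positivity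
  have hATle : AT ≤ 0 := by
    rcases le_or_gt 0 lam with hl | hl
    · nlinarith [hZneg, hZeq, mul_nonneg hl hSTnn]
    · have h4 : 4*ε*(-lam) < 1 := by
        rwa [max_eq_left (by linarith : (0:ℝ) ≤ -lam)] at hsmall
      have h5 : 0 < 1 + 4*ε*lam := by nlinarith [h4]
      nlinarith [hZneg, hZeq, hATnn,
        mul_le_mul_of_nonneg_left hgr (by linarith : (0:ℝ) ≤ -lam),
        mul_pos hε h5]
  have hzero := zero_of_weighted_integral_nonpos hT hε hgC hg0 hATle
  intro t ht
  have h := hzero t ht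
  have : u t - v t = 0 := h
  exact sub_eq_zero.mp this
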